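/- Let n₋ ≥ 1, n₊ ≥ 0, n = n₋ + n₊, and n_w ≥ 1. Let Λ : [0,1] → ℝ^{n×n} be diagonal with continuously differentiable diagonal entries λ₁(z) ≥ … ≥ λ_{n₋}(z) > 0 > λ_{n₋+1}(z) ≥ … ≥ λ_n(z) for all z ∈ [0,1]. Let A : [0,1] → ℝ^{n×n} and A₀ : [0,1] → ℝ^{n×n₋} be continuously differentiable, F : [0,1]² → ℝ^{n×n} be continuously differentiable, C : [0,1] → ℝ^{n×n_w} be continuous, and let F̃_w ∈ ℝ^{n_w×n_w}, K_w ∈ ℝ^{n₋×n_w}, Q₀ ∈ ℝ^{n₊×n₋}, C₀ ∈ ℝ^{n₊×n_w} be constant matrices. Then there exists a unique continuously differentiable Σ : [0,1] → ℝ^{n×n_w} satisfying the decoupling equations Λ(z)Σ′(z) + A(z)Σ(z) − Σ(z)F̃_w + ∫₀^z F(z,ζ)Σ(ζ) dζ = A₀(z)K_w − C(z) for all z ∈ (0,1], together with the initial condition Σ(0) = −E₋K_w + E₊(C₀ − Q₀K_w). -/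

import Mathlib

open Matrix Set

open Matrix Set MeasureTheory intervalIntegral Function

namespace LDEAux

noncomputable def pc (z : ℝ) : ℝ := max 0 (min z 1)

lemma pc_mem (z : ℝ) : pc z ∈ Icc (0:ℝ) 1 :=
  ⟨le_max_left _ _, max_le (by norm_num) (min_le_right _ _)⟩

lemma pc_of_mem {z : ℝ} (hz : z ∈ Icc (0:ℝ) 1) : pc z = z := by
  unfold pc; rw [min_eq_left hz.2, max_eq_right hz.1]

lemma pc_pc (z : ℝ) : pc (pc z) = pc z := pc_of_mem (pc_mem z)

lemma continuous_pc : Continuous pc :=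
  continuous_const.max (continuous_id.min continuous_const)

theorem volterra {E : Type*} [NormedAddCommGroup E] [NormedSpace ℝ E] [CompleteSpace E]
    (v : ℝ → E → E) (w : ℝ → ℝ → E → E) (x₀ : E) (L : ℝ) (hL : 0 ≤ L)
    (hv : Continuous fun p : ℝ × E => v p.1 p.2)
    (hw : Continuous fun p : ℝ × ℝ × E => w p.1 p.2.1 p.2.2)
    (hvlip : ∀ s x y, ‖v s x - v s y‖ ≤ L * ‖x - y‖)
    (hwlip : ∀ s t x y, ‖w s t x - w s t y‖ ≤ L * ‖x - y‖) :
    ∃ f : ℝ → E, Continuous f ∧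
      (∀ z ∈ Icc (0:ℝ) 1,
        f z = x₀ + ∫ s in (0:ℝ)..z, (v s (f s) + ∫ t in (0:ℝ)..s, w s t (f t))) ∧
      ∀ g : ℝ → E, Continuous (fun z => g (pc z)) →
        (∀ z ∈ Icc (0:ℝ) 1,
          g z = x₀ + ∫ s in (0:ℝ)..z, (v s (g s) + ∫ t in (0:ℝ)..s, w s t (g t))) →
        ∀ z ∈ Icc (0:ℝ) 1, g z = f z := by
  classical
  set α := BoundedContinuousFunction ℝ E with hα
  haveI : Nonempty α := ⟨0⟩
  -- continuity of the integrand
  have hGcont : ∀ f : ℝ → E, Continuous f →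
      Continuous fun s => v s (f s) + ∫ t in (0:ℝ)..s, w s t (f t) := by
    intro f hf
    refine (hv.comp (continuous_id.prodMk hf)).add ?_
    have hu : Continuous (Function.uncurry fun s t => w s t (f t)) :=
      hw.comp (continuous_fst.prodMk (continuous_snd.prodMk (hf.comp continuous_snd)))
    exact intervalIntegral.continuous_parametric_intervalIntegral_of_continuous hu continuous_id
  have hPcont : ∀ f : ℝ → E, Continuous f →
      Continuous fun u => x₀ + ∫ s in (0:ℝ)..u, (v s (f s) + ∫ t in (0:ℝ)..s, w s t (f t)) := by
    intro f hf
    exact continuous_const.add (intervalIntegral.continuous_primitive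
      (fun a b => (hGcont f hf).intervalIntegrable a b) 0)
  -- the Picard operator
  have key : ∀ f : α, ∃ Tf : α, ∀ z, Tf z =
      x₀ + ∫ s in (0:ℝ)..(pc z), (v s (f s) + ∫ t in (0:ℝ)..s, w s t (f t)) := by
    intro f
    have hP := hPcont f f.continuous
    obtain ⟨C, hC⟩ := isCompact_Icc.exists_bound_of_continuousOn hP.continuousOn
    exact ⟨BoundedContinuousFunction.ofNormedAddCommGroup _ (hP.comp continuous_pc) C
      (fun z => hC _ (pc_mem z)), fun z => rfl⟩
  set T : α → α := fun f => (key f).choose with hTdef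
  have hT : ∀ (f : α) (z : ℝ), T f z =
      x₀ + ∫ s in (0:ℝ)..(pc z), (v s (f s) + ∫ t in (0:ℝ)..s, w s t (f t)) :=
    fun f => (key f).choose_spec
  have hTpc : ∀ (f : α) (z : ℝ), T f z = T f (pc z) := by
    intro f z; rw [hT, hT, pc_pc]
  -- one-step estimate
  have step : ∀ (f g : α) (D : ℝ), 0 ≤ D → ∀ N : ℕ,
      (∀ s ∈ Icc (0:ℝ) 1, ‖f s - g s‖ ≤ (2*L+1)^N * s^N / N.factorial * D) →
      ∀ z ∈ Icc (0:ℝ) 1,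
        ‖T f z - T g z‖ ≤ (2*L+1)^(N+1) * z^(N+1) / (N+1).factorial * D := by
    intro f g D hD N hfg z hz
    have hfac : (0:ℝ) < N.factorial := by exact_mod_cast N.factorial_pos
    have h2L : (0:ℝ) < 2*L+1 := by linarith
    rw [hT, hT, pc_of_mem hz, add_sub_add_left_eq_sub]
    have hint1 := hGcont f f.continuous
    have hint2 := hGcont g g.continuous
    rw [← intervalIntegral.integral_sub (hint1.intervalIntegrable 0 z)
      (hint2.intervalIntegrable 0 z)]
    have hbnd : ∀ s, s ∈ uIoc (0:ℝ) z →
        ‖(v s (f s) + ∫ t in (0:ℝ)..s, w s t (f t)) -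
          (v s (g s) + ∫ t in (0:ℝ)..s, w s t (g t))‖ ≤
          (2*L+1)^(N+1) * s^N / N.factorial * D := by
      intro s hs
      rw [uIoc_of_le hz.1] at hs
      have hs1 : s ∈ Icc (0:ℝ) 1 := ⟨hs.1.le, hs.2.trans hz.2⟩
      have hwf : Continuous fun t : ℝ => w s t (f t) :=
        hw.comp (continuous_const.prodMk (continuous_id.prodMk f.continuous))
      have hwg : Continuous fun t : ℝ => w s t (g t) :=
        hw.comp (continuous_const.prodMk (continuous_id.prodMk g.continuous))
      have e1 : (v s (f s) + ∫ t in (0:ℝ)..s, w s t (f t)) -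
          (v s (g s) + ∫ t in (0:ℝ)..s, w s t (g t)) =
          (v s (f s) - v s (g s)) +
            ∫ t in (0:ℝ)..s, (w s t (f t) - w s t (g t)) := by
        rw [intervalIntegral.integral_sub (hwf.intervalIntegrable 0 s)
          (hwg.intervalIntegrable 0 s)]
        abel
      rw [e1]
      have h2 : ‖∫ t in (0:ℝ)..s, (w s t (f t) - w s t (g t))‖ ≤
          |∫ t in (0:ℝ)..s, L * ((2*L+1)^N * t^N / N.factorial * D)| := by
        apply intervalIntegral.norm_integral_le_abs_of_norm_le
        · filter_upwards [ae_restrict_mem measurableSet_uIoc] with t ht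
          rw [uIoc_of_le hs1.1] at ht
          have ht1 : t ∈ Icc (0:ℝ) 1 := ⟨ht.1.le, ht.2.trans hs1.2⟩
          exact (hwlip s t (f t) (g t)).trans
            (mul_le_mul_of_nonneg_left (hfg t ht1) hL)
        · exact (by fun_prop : Continuous fun t : ℝ =>
            L * ((2*L+1)^N * t^N / N.factorial * D)).intervalIntegrable 0 s
      have h3 : (∫ t in (0:ℝ)..s, L * ((2*L+1)^N * t^N / N.factorial * D)) =
          L * (2*L+1)^N / N.factorial * D * (s^(N+1) / (N+1)) := by
        have : (fun t : ℝ => L * ((2*L+1)^N * t^N / N.factorial * D)) =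
            fun t : ℝ => (L * (2*L+1)^N / N.factorial * D) * t^N := by
          funext t; ring
        rw [this, intervalIntegral.integral_const_mul, integral_pow]
        ring
      have h4 : ‖v s (f s) - v s (g s)‖ ≤ L * ((2*L+1)^N * s^N / N.factorial * D) :=
        (hvlip s (f s) (g s)).trans (mul_le_mul_of_nonneg_left (hfg s hs1) hL)
      have hpow : (0:ℝ) ≤ (2*L+1)^N := by positivity
      have hsN0 : (0:ℝ) ≤ s^N := pow_nonneg hs1.1 N
      have hsdivpos : (0:ℝ) ≤ s^(N+1)/(N+1) :=
        div_nonneg (pow_nonneg hs1.1 _) (by positivity)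
      have h2b : ‖∫ t in (0:ℝ)..s, (w s t (f t) - w s t (g t))‖ ≤
          L * (2*L+1)^N / N.factorial * D * (s^(N+1)/(N+1)) := by
        refine h2.trans ?_
        rw [h3, abs_of_nonneg]
        exact mul_nonneg (mul_nonneg (div_nonneg
          (mul_nonneg hL hpow) hfac.le) hD) hsdivpos
      have h5 := (norm_add_le (v s (f s) - v s (g s))
        (∫ t in (0:ℝ)..s, (w s t (f t) - w s t (g t)))).trans (add_le_add h4 h2b)
      refine h5.trans ?_
      have hsN : s^(N+1) ≤ s^N := pow_le_pow_of_le_one hs1.1 hs1.2 (Nat.le_succ N)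
      have hsdiv : s^(N+1)/(N+1) ≤ s^N := by
        rw [div_le_iff₀ (by positivity : (0:ℝ) < (N:ℝ)+1)]
        nlinarith
      have hc0 : (0:ℝ) ≤ L * (2*L+1)^N / N.factorial * D :=
        mul_nonneg (div_nonneg (mul_nonneg hL hpow) hfac.le) hD
      have hh : L * (2*L+1)^N / N.factorial * D * (s^(N+1)/(N+1)) ≤
          L * (2*L+1)^N / N.factorial * D * s^N :=
        mul_le_mul_of_nonneg_left hsdiv hc0
      have hbase : (0:ℝ) ≤ (2*L+1)^N * s^N / N.factorial * D :=
        mul_nonneg (div_nonneg (mul_nonneg hpow hsN0) hfac.le) hD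
      calc L * ((2*L+1)^N * s^N / N.factorial * D) +
            L * (2*L+1)^N / N.factorial * D * (s^(N+1)/(N+1))
          ≤ L * ((2*L+1)^N * s^N / N.factorial * D) +
            L * (2*L+1)^N / N.factorial * D * s^N := by linarith
        _ = 2*L*((2*L+1)^N * s^N / N.factorial * D) := by ring
        _ ≤ (2*L+1)*((2*L+1)^N * s^N / N.factorial * D) :=
            mul_le_mul_of_nonneg_right (by linarith) hbase
        _ = (2*L+1)^(N+1) * s^N / N.factorial * D := by rw [pow_succ]; ring
    have h6 : ‖∫ s in (0:ℝ)..z, ((v s (f s) + ∫ t in (0:ℝ)..s, w s t (f t)) -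
          (v s (g s) + ∫ t in (0:ℝ)..s, w s t (g t)))‖ ≤
        |∫ s in (0:ℝ)..z, (2*L+1)^(N+1) * s^N / N.factorial * D| := by
      apply intervalIntegral.norm_integral_le_abs_of_norm_le
      · filter_upwards [ae_restrict_mem measurableSet_uIoc] with s hs
        exact hbnd s hs
      · exact (by fun_prop : Continuous fun s : ℝ =>
          (2*L+1)^(N+1) * s^N / N.factorial * D).intervalIntegrable 0 z
    refine h6.trans ?_
    have h7 : (∫ s in (0:ℝ)..z, (2*L+1)^(N+1) * s^N / N.factorial * D) =
        (2*L+1)^(N+1) * z^(N+1) / (N+1).factorial * D := by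
      have : (fun s : ℝ => (2*L+1)^(N+1) * s^N / N.factorial * D) =
          fun s : ℝ => ((2*L+1)^(N+1) / N.factorial * D) * s^N := by
        funext s; ring
      rw [this, intervalIntegral.integral_const_mul, integral_pow, Nat.factorial_succ]
      push_cast
      field_simp
      ring
    rw [h7]
    rw [abs_of_nonneg (mul_nonneg (div_nonneg (mul_nonneg (by positivity)
      (pow_nonneg hz.1 _)) (by positivity)) hD)]
  -- iterated estimate
  have iter : ∀ (N : ℕ) (f g : α), ∀ z ∈ Icc (0:ℝ) 1,
      ‖(T^[N] f) z - (T^[N] g) z‖ ≤ (2*L+1)^N * z^N / N.factorial * dist f g := by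
    intro N
    induction N with
    | zero =>
      intro f g z hz
      have hd := BoundedContinuousFunction.dist_coe_le_dist (f := f) (g := g) z
      rw [dist_eq_norm] at hd
      simpa using hd
    | succ N ih =>
      intro f g z hz
      rw [Function.iterate_succ_apply', Function.iterate_succ_apply']
      exact step _ _ (dist f g) dist_nonneg N (fun s hs => ih f g s hs) z hz
  -- choose N making the iterate a contraction
  have h2L : (0:ℝ) < 2*L+1 := by linarith
  obtain ⟨N, hNlt, hN1⟩ : ∃ N : ℕ, (2*L+1)^N / N.factorial < 1 ∧ 1 ≤ N := by
    have h := FloorSemiring.tendsto_pow_div_factorial_atTop (K := ℝ) (2*L+1)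
    exact ((h.eventually_lt_const one_pos).and (Filter.eventually_ge_atTop 1)).exists
  have hcN : (0:ℝ) ≤ (2*L+1)^N / N.factorial := by positivity
  set c : NNReal := ⟨(2*L+1)^N / N.factorial, hcN⟩ with hc
  have hTlip : LipschitzWith c (T^[N]) := by
    apply LipschitzWith.of_dist_le_mul
    intro f g
    refine (BoundedContinuousFunction.dist_le
      (mul_nonneg hcN dist_nonneg)).2 fun z => ?_
    obtain ⟨N', rfl⟩ : ∃ N', N = N' + 1 := ⟨N - 1, (Nat.succ_pred_eq_of_pos hN1).symm⟩
    have hpcf : (T^[N'+1] f) z = (T^[N'+1] f) (pc z) := by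
      rw [Function.iterate_succ_apply']; exact hTpc _ _
    have hpcg : (T^[N'+1] g) z = (T^[N'+1] g) (pc z) := by
      rw [Function.iterate_succ_apply']; exact hTpc _ _
    rw [dist_eq_norm, hpcf, hpcg]
    refine (iter (N'+1) f g (pc z) (pc_mem z)).trans ?_
    have hple : (pc z)^(N'+1) ≤ 1 := pow_le_one₀ (pc_mem z).1 (pc_mem z).2
    have hp0 : (0:ℝ) ≤ (pc z)^(N'+1) := pow_nonneg (pc_mem z).1 _
    have : (2*L+1)^(N'+1) * (pc z)^(N'+1) / (N'+1).factorial ≤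
        (2*L+1)^(N'+1) / (N'+1).factorial := by
      rw [div_le_div_iff_of_pos_right (by exact_mod_cast (N'+1).factorial_pos)]
      nlinarith [pow_nonneg h2L.le (N'+1)]
    calc (2*L+1)^(N'+1) * (pc z)^(N'+1) / (N'+1).factorial * dist f g
        ≤ (2*L+1)^(N'+1) / (N'+1).factorial * dist f g :=
          mul_le_mul_of_nonneg_right this dist_nonneg
      _ = (c : ℝ) * dist f g := rfl
  have hcontr : ContractingWith c (T^[N]) := ⟨by exact_mod_cast hNlt, hTlip⟩
  set Fp : α := ContractingWith.fixedPoint (T^[N]) hcontr with hFp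
  have hfixN : Function.IsFixedPt (T^[N]) Fp := hcontr.fixedPoint_isFixedPt
  have hfixT : T Fp = Fp := by
    have h1 : Function.IsFixedPt (T^[N]) (T Fp) := by
      show (T^[N]) (T Fp) = T Fp
      rw [← Function.iterate_succ_apply, Function.iterate_succ_apply', hfixN.eq]
    exact hcontr.fixedPoint_unique h1
  have heqF : ∀ z ∈ Icc (0:ℝ) 1, Fp z =
      x₀ + ∫ s in (0:ℝ)..z, (v s (Fp s) + ∫ t in (0:ℝ)..s, w s t (Fp t)) := by
    intro z hz
    conv_lhs => rw [← hfixT]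
    rw [hT, pc_of_mem hz]
  refine ⟨Fp, Fp.continuous, heqF, ?_⟩
  -- uniqueness
  intro g hgc hgeq z hz
  have hgen : ∀ u ∈ Icc (0:ℝ) 1, g (pc u) = g u := fun u hu => by rw [pc_of_mem hu]
  obtain ⟨Cg, hCg⟩ := isCompact_Icc.exists_bound_of_continuousOn hgc.continuousOn
  set Gb : α := BoundedContinuousFunction.ofNormedAddCommGroup _ hgc Cg
    (fun u => by
      have := hCg (pc u) (pc_mem u)
      rwa [pc_pc] at this) with hGb
  have hGbval : ∀ u : ℝ, Gb u = g (pc u) := fun u => rfl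
  have hfixG : T Gb = Gb := by
    ext u
    rw [hT]
    have hpu := pc_mem u
    have hcongr : (∫ s in (0:ℝ)..(pc u), (v s (Gb s) + ∫ t in (0:ℝ)..s, w s t (Gb t))) =
        ∫ s in (0:ℝ)..(pc u), (v s (g s) + ∫ t in (0:ℝ)..s, w s t (g t)) := by
      apply intervalIntegral.integral_congr
      intro s hs
      rw [uIcc_of_le hpu.1] at hs
      have hs1 : s ∈ Icc (0:ℝ) 1 := ⟨hs.1, hs.2.trans hpu.2⟩
      have h1 : Gb s = g s := by rw [hGbval, pc_of_mem hs1]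
      show v s (Gb s) + (∫ t in (0:ℝ)..s, w s t (Gb t)) =
        v s (g s) + ∫ t in (0:ℝ)..s, w s t (g t)
      rw [h1]
      congr 1
      apply intervalIntegral.integral_congr
      intro t ht
      rw [uIcc_of_le hs1.1] at ht
      have ht1 : t ∈ Icc (0:ℝ) 1 := ⟨ht.1, ht.2.trans hs1.2⟩
      show w s t (Gb t) = w s t (g t)
      rw [hGbval, pc_of_mem ht1]
    rw [hcongr, ← hgeq (pc u) hpu]
    exact (hGbval u).symm
  have hfixGN : Function.IsFixedPt (T^[N]) Gb :=
    Function.IsFixedPt.iterate (show Function.IsFixedPt T Gb from hfixG) N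
  have : Gb = Fp := hcontr.fixedPoint_unique hfixGN
  calc g z = Gb z := by rw [hGbval, pc_of_mem hz]
    _ = Fp z := by rw [this]

attribute [local instance] Matrix.normedAddCommGroup Matrix.normedSpace

lemma entry_mul_bound {k l m : Type*} [Fintype k] [Fintype l] [Fintype m]
    (M : Matrix k l ℝ) (N : Matrix l m ℝ) (i : k) (j : m) :
    |(M * N) i j| ≤ (Fintype.card l : ℝ) * ‖M‖ * ‖N‖ := by
  rw [Matrix.mul_apply]
  calc |∑ x, M i x * N x j| ≤ ∑ x, |M i x * N x j| := Finset.abs_sum_le_sum_abs _ _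
    _ ≤ ∑ _x : l, ‖M‖ * ‖N‖ := by
        apply Finset.sum_le_sum
        intro x _
        rw [abs_mul, ← Real.norm_eq_abs, ← Real.norm_eq_abs]
        exact mul_le_mul M.norm_entry_le_entrywise_sup_norm
          N.norm_entry_le_entrywise_sup_norm (norm_nonneg _) (norm_nonneg _)
    _ = (Fintype.card l : ℝ) * (‖M‖ * ‖N‖) := by
        rw [Finset.sum_const, Finset.card_univ, nsmul_eq_mul]
    _ = (Fintype.card l : ℝ) * ‖M‖ * ‖N‖ := by ring

end LDEAux

open LDEAux

attribute [local instance] Matrix.normedAddCommGroup Matrix.normedSpace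

/-- `E₋ = [I_{n₋}; 0] ∈ ℝ^{(n₋+n₊)×n₋}`. -/
def Eminus (nm np : ℕ) : Matrix (Fin (nm + np)) (Fin nm) ℝ :=
  Matrix.of fun i j => if (i : ℕ) = (j : ℕ) then 1 else 0

/-- `E₊ = [0; I_{n₊}] ∈ ℝ^{(n₋+n₊)×n₊}`. -/
def Eplus (nm np : ℕ) : Matrix (Fin (nm + np)) (Fin np) ℝ :=
  Matrix.of fun i j => if (i : ℕ) = nm + (j : ℕ) then 1 else 0

/-- the local decoupling equations have a unique continuously differentiable
solution `Σ : [0,1] → ℝ^{n×n_w}`. -/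
theorem local_decoupling_equations_unique_solution
    (nm np nw : ℕ) (hnm : 1 ≤ nm) (hnw : 1 ≤ nw)
    (Λ : ℝ → Matrix (Fin (nm + np)) (Fin (nm + np)) ℝ)
    (hΛdiag : ∀ z ∈ Icc (0 : ℝ) 1, (Λ z).IsDiag)
    (hΛC1 : ∀ i j, ContDiffOn ℝ 1 (fun z => Λ z i j) (Icc 0 1))
    (hΛsorted : ∀ z ∈ Icc (0 : ℝ) 1, ∀ i j : Fin (nm + np), i ≤ j → Λ z j j ≤ Λ z i i)
    (hΛsign : ∀ z ∈ Icc (0 : ℝ) 1, ∀ i : Fin (nm + np),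
      ((i : ℕ) < nm → 0 < Λ z i i) ∧ (nm ≤ (i : ℕ) → Λ z i i < 0))
    (A : ℝ → Matrix (Fin (nm + np)) (Fin (nm + np)) ℝ)
    (hA : ∀ i j, ContDiffOn ℝ 1 (fun z => A z i j) (Icc 0 1))
    (A₀ : ℝ → Matrix (Fin (nm + np)) (Fin nm) ℝ)
    (hA₀ : ∀ i j, ContDiffOn ℝ 1 (fun z => A₀ z i j) (Icc 0 1))
    (F : ℝ → ℝ → Matrix (Fin (nm + np)) (Fin (nm + np)) ℝ)
    (hF : ∀ i j, ContDiffOn ℝ 1 (fun p : ℝ × ℝ => F p.1 p.2 i j) (Icc 0 1 ×ˢ Icc 0 1))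
    (C : ℝ → Matrix (Fin (nm + np)) (Fin nw) ℝ)
    (hC : ∀ i j, ContinuousOn (fun z => C z i j) (Icc 0 1))
    (Fw : Matrix (Fin nw) (Fin nw) ℝ) (Kw : Matrix (Fin nm) (Fin nw) ℝ)
    (Q₀ : Matrix (Fin np) (Fin nm) ℝ) (C₀ : Matrix (Fin np) (Fin nw) ℝ) :
    ∃ Sg : ℝ → Matrix (Fin (nm + np)) (Fin nw) ℝ,
      ((∀ i j, ContDiffOn ℝ 1 (fun z => Sg z i j) (Icc 0 1)) ∧
        (∀ z ∈ Ioc (0 : ℝ) 1,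
          Λ z * (Matrix.of fun i j => derivWithin (fun t => Sg t i j) (Icc 0 1) z)
              + A z * Sg z - Sg z * Fw
              + (Matrix.of fun i j => ∫ ζ in (0 : ℝ)..z, (F z ζ * Sg ζ) i j)
            = A₀ z * Kw - C z) ∧
        Sg 0 = -(Eminus nm np * Kw) + Eplus nm np * (C₀ - Q₀ * Kw)) ∧
      ∀ Sg' : ℝ → Matrix (Fin (nm + np)) (Fin nw) ℝ,
        ((∀ i j, ContDiffOn ℝ 1 (fun z => Sg' z i j) (Icc 0 1)) ∧
          (∀ z ∈ Ioc (0 : ℝ) 1,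
            Λ z * (Matrix.of fun i j => derivWithin (fun t => Sg' t i j) (Icc 0 1) z)
                + A z * Sg' z - Sg' z * Fw
                + (Matrix.of fun i j => ∫ ζ in (0 : ℝ)..z, (F z ζ * Sg' ζ) i j)
              = A₀ z * Kw - C z) ∧
          Sg' 0 = -(Eminus nm np * Kw) + Eplus nm np * (C₀ - Q₀ * Kw)) →
        ∀ z ∈ Icc (0 : ℝ) 1, Sg' z = Sg z := by
  classical
  haveI : CompleteSpace (Matrix (Fin (nm + np)) (Fin nw) ℝ) :=
    FiniteDimensional.complete ℝ _
  -- entry evaluation commutes with interval integration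
  have ecomm : ∀ (a b : ℝ) (Ψ : ℝ → Matrix (Fin (nm + np)) (Fin nw) ℝ), Continuous Ψ →
      ∀ (i : Fin (nm + np)) (j : Fin nw),
      (∫ s in a..b, Ψ s) i j = ∫ s in a..b, Ψ s i j := by
    intro a b Ψ hΨ i j
    exact ((LinearMap.toContinuousLinearMap
      (Matrix.entryLinearMap ℝ ℝ i j)).intervalIntegral_comp_comm
      (hΨ.intervalIntegrable a b)).symm
  -- diagonal multiplication
  have hdm : ∀ z ∈ Icc (0:ℝ) 1, ∀ (M : Matrix (Fin (nm + np)) (Fin nw) ℝ) i j,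
      (Λ z * M) i j = Λ z i i * M i j := by
    intro z hz M i j
    rw [Matrix.mul_apply, Finset.sum_eq_single i]
    · intro k _ hk
      rw [hΛdiag z hz (Ne.symm hk), zero_mul]
    · intro h; exact absurd (Finset.mem_univ i) h
  -- continuity of clamped coefficients
  have hΛc : ∀ (i j : Fin (nm + np)), Continuous fun s => Λ (pc s) i j :=
    fun i j => (hΛC1 i j).continuousOn.comp_continuous continuous_pc pc_mem
  have hΛne : ∀ z ∈ Icc (0:ℝ) 1, ∀ i : Fin (nm + np), Λ z i i ≠ 0 := by
    intro z hz i
    rcases lt_or_ge ((i : ℕ)) nm with h | h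
    · exact ne_of_gt ((hΛsign z hz i).1 h)
    · exact ne_of_lt ((hΛsign z hz i).2 h)
  set dinv : ℝ → Fin (nm + np) → ℝ := fun s i => (Λ (pc s) i i)⁻¹ with hdinv
  have hdinvc : ∀ i, Continuous fun s => dinv s i := by
    intro i
    simp only [hdinv]
    exact (hΛc i i).inv₀ fun s => hΛne (pc s) (pc_mem s) i
  have hAc : ∀ i j, Continuous fun s => A (pc s) i j :=
    fun i j => (hA i j).continuousOn.comp_continuous continuous_pc pc_mem
  have hA₀c : ∀ i j, Continuous fun s => A₀ (pc s) i j :=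
    fun i j => (hA₀ i j).continuousOn.comp_continuous continuous_pc pc_mem
  have hCc : ∀ i j, Continuous fun s => C (pc s) i j :=
    fun i j => (hC i j).comp_continuous continuous_pc pc_mem
  have hFcc : ∀ i j, Continuous fun p : ℝ × ℝ => F (pc p.1) (pc p.2) i j := by
    intro i j
    exact (hF i j).continuousOn.comp_continuous
      ((continuous_pc.comp continuous_fst).prodMk (continuous_pc.comp continuous_snd))
      (fun p => Set.mk_mem_prod (pc_mem _) (pc_mem _))
  -- the maps v and w
  set v : ℝ → Matrix (Fin (nm + np)) (Fin nw) ℝ → Matrix (Fin (nm + np)) (Fin nw) ℝ :=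
    fun s x => Matrix.of fun i j => dinv s i *
      ((A₀ (pc s) * Kw - C (pc s)) i j - (A (pc s) * x) i j + (x * Fw) i j) with hvdef
  set w : ℝ → ℝ → Matrix (Fin (nm + np)) (Fin nw) ℝ → Matrix (Fin (nm + np)) (Fin nw) ℝ :=
    fun s t x => Matrix.of fun i j => dinv s i * (-((F (pc s) (pc t) * x) i j)) with hwdef
  have hvapp : ∀ s x i j, v s x i j = dinv s i *
      ((A₀ (pc s) * Kw - C (pc s)) i j - (A (pc s) * x) i j + (x * Fw) i j) :=
    fun s x i j => rfl
  have hwapp : ∀ s t x i j, w s t x i j = dinv s i * (-((F (pc s) (pc t) * x) i j)) :=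
    fun s t x i j => rfl
  have hvc : Continuous fun p : ℝ × Matrix (Fin (nm + np)) (Fin nw) ℝ => v p.1 p.2 := by
    apply continuous_matrix
    intro i j
    simp only [hvdef, Matrix.of_apply, Matrix.sub_apply, Matrix.mul_apply]
    refine ((hdinvc i).comp continuous_fst).mul ?_
    refine Continuous.add (Continuous.sub (Continuous.sub ?_ ?_) ?_) ?_
    · exact (continuous_finset_sum _ fun k _ =>
        ((hA₀c i k).comp continuous_fst).mul continuous_const)
    · exact (hCc i j).comp continuous_fst
    · exact continuous_finset_sum _ fun k _ =>
        ((hAc i k).comp continuous_fst).mul (continuous_snd.matrix_elem k j)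
    · exact continuous_finset_sum _ fun k _ =>
        (continuous_snd.matrix_elem i k).mul continuous_const
  have hwc : Continuous fun p : ℝ × ℝ × Matrix (Fin (nm + np)) (Fin nw) ℝ =>
      w p.1 p.2.1 p.2.2 := by
    apply continuous_matrix
    intro i j
    simp only [hwdef, Matrix.of_apply, Matrix.mul_apply]
    refine ((hdinvc i).comp continuous_fst).mul (Continuous.neg ?_)
    exact continuous_finset_sum _ fun k _ =>
      ((hFcc i k).comp (continuous_fst.prodMk (continuous_fst.comp continuous_snd))).mul
        ((continuous_snd.comp continuous_snd).matrix_elem k j)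
  -- bounds
  obtain ⟨D, hD0, hD⟩ : ∃ D, 0 ≤ D ∧ ∀ (s : ℝ) i, |dinv s i| ≤ D := by
    have hcont : Continuous fun s => dinv s := continuous_pi hdinvc
    obtain ⟨D₀, hD₀⟩ := isCompact_Icc.exists_bound_of_continuousOn hcont.continuousOn
    refine ⟨max D₀ 0, le_max_right _ _, fun s i => ?_⟩
    have h1 : dinv s = dinv (pc s) := by
      funext k; simp only [hdinv]; rw [pc_pc]
    calc |dinv s i| = ‖dinv s i‖ := (Real.norm_eq_abs _).symm
      _ ≤ ‖dinv s‖ := norm_le_pi_norm (dinv s) i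
      _ = ‖dinv (pc s)‖ := by rw [h1]
      _ ≤ D₀ := hD₀ _ (pc_mem s)
      _ ≤ max D₀ 0 := le_max_left _ _
  obtain ⟨MA, hMA0, hMA⟩ : ∃ MA, 0 ≤ MA ∧ ∀ s : ℝ, ‖A (pc s)‖ ≤ MA := by
    have hcont : Continuous fun s => A (pc s) := continuous_matrix hAc
    obtain ⟨M₀, hM₀⟩ := isCompact_Icc.exists_bound_of_continuousOn hcont.continuousOn
    refine ⟨max M₀ 0, le_max_right _ _, fun s => ?_⟩
    calc ‖A (pc s)‖ = ‖A (pc (pc s))‖ := by rw [pc_pc]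
      _ ≤ M₀ := hM₀ _ (pc_mem s)
      _ ≤ max M₀ 0 := le_max_left _ _
  obtain ⟨MF, hMF0, hMF⟩ : ∃ MF, 0 ≤ MF ∧ ∀ s t : ℝ, ‖F (pc s) (pc t)‖ ≤ MF := by
    have hcont : Continuous fun p : ℝ × ℝ => F (pc p.1) (pc p.2) := continuous_matrix hFcc
    obtain ⟨M₀, hM₀⟩ := (isCompact_Icc.prod isCompact_Icc).exists_bound_of_continuousOn
      hcont.continuousOn
    refine ⟨max M₀ 0, le_max_right _ _, fun s t => ?_⟩
    have := hM₀ (pc s, pc t) (Set.mk_mem_prod (pc_mem s) (pc_mem t))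
    calc ‖F (pc s) (pc t)‖ = ‖F (pc (pc s)) (pc (pc t))‖ := by rw [pc_pc, pc_pc]
      _ ≤ M₀ := this
      _ ≤ max M₀ 0 := le_max_left _ _
  set L : ℝ := D * ((nm + np : ℝ) * MA + (nw : ℝ) * ‖Fw‖) + D * (nm + np : ℝ) * MF
    with hLdef
  have hpiece1 : 0 ≤ D * ((nm + np : ℝ) * MA + (nw : ℝ) * ‖Fw‖) :=
    mul_nonneg hD0 (add_nonneg (mul_nonneg (by positivity) hMA0)
      (mul_nonneg (by positivity) (norm_nonneg _)))
  have hpiece2 : 0 ≤ D * (nm + np : ℝ) * MF :=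
    mul_nonneg (mul_nonneg hD0 (by positivity)) hMF0
  have hL0 : 0 ≤ L := by rw [hLdef]; linarith
  -- Lipschitz bounds
  have hvlip : ∀ s x y, ‖v s x - v s y‖ ≤ L * ‖x - y‖ := by
    intro s x y
    rw [Matrix.norm_le_iff (mul_nonneg hL0 (norm_nonneg _))]
    intro i j
    have he : (v s x - v s y) i j =
        dinv s i * (-((A (pc s) * (x - y)) i j) + ((x - y) * Fw) i j) := by
      rw [Matrix.sub_apply, hvapp, hvapp, Matrix.mul_sub, Matrix.sub_mul]
      simp only [Matrix.sub_apply]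
      ring
    rw [Real.norm_eq_abs, he, abs_mul]
    have h1 : |(A (pc s) * (x - y)) i j| ≤ (nm + np : ℝ) * MA * ‖x - y‖ := by
      refine (entry_mul_bound _ _ i j).trans ?_
      rw [Fintype.card_fin]
      push_cast
      exact mul_le_mul_of_nonneg_right
        (mul_le_mul_of_nonneg_left (hMA s) (by positivity)) (norm_nonneg _)
    have h2 : |((x - y) * Fw) i j| ≤ (nw : ℝ) * ‖x - y‖ * ‖Fw‖ := by
      refine (entry_mul_bound _ _ i j).trans_eq ?_
      rw [Fintype.card_fin]
    have h3 : |(-((A (pc s) * (x - y)) i j) + ((x - y) * Fw) i j)| ≤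
        (nm + np : ℝ) * MA * ‖x - y‖ + (nw : ℝ) * ‖x - y‖ * ‖Fw‖ := by
      refine (abs_add_le _ _).trans ?_
      rw [abs_neg]
      exact add_le_add h1 h2
    calc |dinv s i| * |(-((A (pc s) * (x - y)) i j) + ((x - y) * Fw) i j)|
        ≤ D * ((nm + np : ℝ) * MA * ‖x - y‖ + (nw : ℝ) * ‖x - y‖ * ‖Fw‖) :=
          mul_le_mul (hD s i) h3 (abs_nonneg _) hD0
      _ = (D * ((nm + np : ℝ) * MA + (nw : ℝ) * ‖Fw‖)) * ‖x - y‖ := by ring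
      _ ≤ L * ‖x - y‖ := by
          apply mul_le_mul_of_nonneg_right _ (norm_nonneg _)
          rw [hLdef]; linarith
  have hwlip : ∀ s t x y, ‖w s t x - w s t y‖ ≤ L * ‖x - y‖ := by
    intro s t x y
    rw [Matrix.norm_le_iff (mul_nonneg hL0 (norm_nonneg _))]
    intro i j
    have he : (w s t x - w s t y) i j =
        dinv s i * (-((F (pc s) (pc t) * (x - y)) i j)) := by
      rw [Matrix.sub_apply, hwapp, hwapp, Matrix.mul_sub, Matrix.sub_apply]
      ring
    rw [Real.norm_eq_abs, he, abs_mul, abs_neg]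
    have h1 : |(F (pc s) (pc t) * (x - y)) i j| ≤ (nm + np : ℝ) * MF * ‖x - y‖ := by
      refine (entry_mul_bound _ _ i j).trans ?_
      rw [Fintype.card_fin]
      push_cast
      exact mul_le_mul_of_nonneg_right
        (mul_le_mul_of_nonneg_left (hMF s t) (by positivity)) (norm_nonneg _)
    calc |dinv s i| * |(F (pc s) (pc t) * (x - y)) i j|
        ≤ D * ((nm + np : ℝ) * MF * ‖x - y‖) := mul_le_mul (hD s i) h1 (abs_nonneg _) hD0
      _ = (D * (nm + np : ℝ) * MF) * ‖x - y‖ := by ring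
      _ ≤ L * ‖x - y‖ := by
          apply mul_le_mul_of_nonneg_right _ (norm_nonneg _)
          rw [hLdef]; linarith
  -- apply the abstract existence/uniqueness result
  obtain ⟨f, hfc, hfeq, huni⟩ := LDEAux.volterra v w
    (-(Eminus nm np * Kw) + Eplus nm np * (C₀ - Q₀ * Kw)) L hL0 hvc hwc hvlip hwlip
  have hwfun : ∀ (z : ℝ) (φ : ℝ → Matrix (Fin (nm + np)) (Fin nw) ℝ), Continuous φ →
      Continuous fun t => w z t (φ t) :=
    fun z φ hφ => hwc.comp (continuous_const.prodMk (continuous_id.prodMk hφ))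
  have hGc : ∀ (φ : ℝ → Matrix (Fin (nm + np)) (Fin nw) ℝ), Continuous φ →
      Continuous fun s => v s (φ s) + ∫ t in (0:ℝ)..s, w s t (φ t) := by
    intro φ hφ
    refine (hvc.comp (continuous_id.prodMk hφ)).add ?_
    have hu : Continuous (Function.uncurry fun s t => w s t (φ t)) :=
      hwc.comp (continuous_fst.prodMk (continuous_snd.prodMk (hφ.comp continuous_snd)))
    exact intervalIntegral.continuous_parametric_intervalIntegral_of_continuous hu continuous_id
  -- the key entrywise formula
  have keyEntry : ∀ (φ : ℝ → Matrix (Fin (nm + np)) (Fin nw) ℝ), Continuous φ →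
      ∀ z ∈ Icc (0:ℝ) 1, ∀ i j,
      (v z (φ z) + ∫ t in (0:ℝ)..z, w z t (φ t)) i j
        = (Λ z i i)⁻¹ * ((A₀ z * Kw) i j - C z i j - (A z * φ z) i j + (φ z * Fw) i j
            - ∫ t in (0:ℝ)..z, (F z t * φ t) i j) := by
    intro φ hφ z hz i j
    have hpz : pc z = z := pc_of_mem hz
    rw [Matrix.add_apply, hvapp, ecomm 0 z _ (hwfun z φ hφ) i j]
    have hcg : EqOn (fun t => (w z t (φ t)) i j)
        (fun t => (Λ z i i)⁻¹ * (-((F z t * φ t) i j))) (uIcc 0 z) := by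
      intro t ht
      rw [uIcc_of_le hz.1] at ht
      have ht1 : t ∈ Icc (0:ℝ) 1 := ⟨ht.1, ht.2.trans hz.2⟩
      show (w z t (φ t)) i j = _
      rw [hwapp]
      simp only [hdinv]
      rw [hpz, pc_of_mem ht1]
    rw [intervalIntegral.integral_congr hcg, intervalIntegral.integral_const_mul,
      intervalIntegral.integral_neg]
    simp only [hdinv, Matrix.sub_apply]
    rw [hpz]
    ring
  -- entrywise integral representation of f
  have hent : ∀ i j, ∀ u ∈ Icc (0:ℝ) 1, f u i j =
      (-(Eminus nm np * Kw) + Eplus nm np * (C₀ - Q₀ * Kw)) i j +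
        ∫ s in (0:ℝ)..u, (v s (f s) + ∫ t in (0:ℝ)..s, w s t (f t)) i j := by
    intro i j u hu
    conv_lhs => rw [hfeq u hu]
    rw [Matrix.add_apply, ecomm 0 u _ (hGc f hfc) i j]
  have hder : ∀ i j (u : ℝ), HasDerivAt
      (fun t => (-(Eminus nm np * Kw) + Eplus nm np * (C₀ - Q₀ * Kw)) i j +
        ∫ s in (0:ℝ)..t, (v s (f s) + ∫ t' in (0:ℝ)..s, w s t' (f t')) i j)
      ((v u (f u) + ∫ t' in (0:ℝ)..u, w u t' (f t')) i j) u := by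
    intro i j u
    have hc : Continuous fun s => (v s (f s) + ∫ t' in (0:ℝ)..s, w s t' (f t')) i j :=
      (hGc f hfc).matrix_elem i j
    exact (intervalIntegral.integral_hasDerivAt_right (hc.intervalIntegrable 0 u)
      hc.stronglyMeasurable.stronglyMeasurableAtFilter hc.continuousAt).const_add _
  have hCD1 : ∀ i j, ContDiffOn ℝ 1 (fun z => f z i j) (Icc 0 1) := by
    intro i j
    have hψ : ContDiff ℝ 1
        (fun t => (-(Eminus nm np * Kw) + Eplus nm np * (C₀ - Q₀ * Kw)) i j +
          ∫ s in (0:ℝ)..t, (v s (f s) + ∫ t' in (0:ℝ)..s, w s t' (f t')) i j) := by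
      rw [contDiff_one_iff_deriv]
      refine ⟨fun u => (hder i j u).differentiableAt, ?_⟩
      have hde : deriv (fun t => (-(Eminus nm np * Kw) + Eplus nm np * (C₀ - Q₀ * Kw)) i j +
          ∫ s in (0:ℝ)..t, (v s (f s) + ∫ t' in (0:ℝ)..s, w s t' (f t')) i j) =
          fun u => (v u (f u) + ∫ t' in (0:ℝ)..u, w u t' (f t')) i j :=
        funext fun u => (hder i j u).deriv
      rw [hde]
      exact (hGc f hfc).matrix_elem i j
    exact hψ.contDiffOn.congr fun u hu => hent i j u hu
  have hdW : ∀ i j, ∀ u ∈ Icc (0:ℝ) 1, derivWithin (fun t => f t i j) (Icc 0 1) u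
      = (v u (f u) + ∫ t' in (0:ℝ)..u, w u t' (f t')) i j := by
    intro i j u hu
    have h1 : derivWithin (fun t => f t i j) (Icc 0 1) u = derivWithin
        (fun t => (-(Eminus nm np * Kw) + Eplus nm np * (C₀ - Q₀ * Kw)) i j +
          ∫ s in (0:ℝ)..t, (v s (f s) + ∫ t' in (0:ℝ)..s, w s t' (f t')) i j) (Icc 0 1) u :=
      derivWithin_congr (fun x hx => hent i j x hx) (hent i j u hu)
    rw [h1]
    exact (hder i j u).hasDerivWithinAt.derivWithin (uniqueDiffOn_Icc zero_lt_one u hu)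
  -- the three existence properties
  refine ⟨f, ⟨hCD1, ?_, ?_⟩, ?_⟩
  · -- the matrix equation
    intro z hzo
    have hz : z ∈ Icc (0:ℝ) 1 := ⟨hzo.1.le, hzo.2⟩
    ext i j
    have hne := hΛne z hz i
    simp only [Matrix.add_apply, Matrix.sub_apply]
    rw [hdm z hz _ i j]
    simp only [Matrix.of_apply]
    rw [hdW i j z hz, keyEntry f hfc z hz i j, ← mul_assoc, mul_inv_cancel₀ hne, one_mul]
    ring
  · -- initial condition
    have h0 := hfeq 0 ⟨le_refl 0, zero_le_one⟩
    simpa [intervalIntegral.integral_same] using h0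
  · -- uniqueness
    rintro Sg' ⟨hC1', heq', hinit'⟩ z hz
    set gb : ℝ → Matrix (Fin (nm + np)) (Fin nw) ℝ := fun u => Sg' (pc u) with hgbdef
    have hgbc : Continuous gb := continuous_matrix fun i j =>
      ((hC1' i j).continuousOn).comp_continuous continuous_pc pc_mem
    have hgbs : ∀ u ∈ Icc (0:ℝ) 1, gb u = Sg' u := by
      intro u hu
      rw [hgbdef]
      simp only
      rw [pc_of_mem hu]
    have hdW' : ∀ (i : Fin (nm + np)) (j : Fin nw), ContinuousOn
        (derivWithin (fun t => Sg' t i j) (Icc 0 1)) (Icc 0 1) :=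
      fun i j => (hC1' i j).continuousOn_derivWithin (uniqueDiffOn_Icc zero_lt_one) le_rfl
    have hentderiv : ∀ s ∈ Ioc (0:ℝ) 1, ∀ i j,
        derivWithin (fun t => Sg' t i j) (Icc 0 1) s
          = (Λ s i i)⁻¹ * ((A₀ s * Kw) i j - C s i j - (A s * Sg' s) i j + (Sg' s * Fw) i j
              - ∫ t in (0:ℝ)..s, (F s t * Sg' t) i j) := by
      intro s hs i j
      have hsI : s ∈ Icc (0:ℝ) 1 := ⟨hs.1.le, hs.2⟩
      have hne := hΛne s hsI i
      have hije : (Λ s * (Matrix.of fun i j => derivWithin (fun t => Sg' t i j) (Icc 0 1) s)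
            + A s * Sg' s - Sg' s * Fw
            + (Matrix.of fun i j => ∫ ζ in (0:ℝ)..s, (F s ζ * Sg' ζ) i j)) i j
          = (A₀ s * Kw - C s) i j := by rw [heq' s hs]
      simp only [Matrix.add_apply, Matrix.sub_apply] at hije
      rw [hdm s hsI _ i j] at hije
      simp only [Matrix.of_apply] at hije
      conv_lhs => rw [← inv_mul_cancel_left₀ hne
        (derivWithin (fun t => Sg' t i j) (Icc 0 1) s)]
      congr 1
      linarith [hije]
    have hgeq : ∀ u ∈ Icc (0:ℝ) 1, gb u =
        (-(Eminus nm np * Kw) + Eplus nm np * (C₀ - Q₀ * Kw)) +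
          ∫ s in (0:ℝ)..u, (v s (gb s) + ∫ t in (0:ℝ)..s, w s t (gb t)) := by
      intro u hu
      ext i j
      rw [Matrix.add_apply, ecomm 0 u _ (hGc gb hgbc) i j]
      have hcongr : ∀ᵐ s ∂(volume), s ∈ uIoc (0:ℝ) u →
          (v s (gb s) + ∫ t in (0:ℝ)..s, w s t (gb t)) i j
            = derivWithin (fun t => Sg' t i j) (Icc 0 1) s := by
        apply ae_of_all
        intro s hs
        rw [uIoc_of_le hu.1] at hs
        have hsIoc : s ∈ Ioc (0:ℝ) 1 := ⟨hs.1, hs.2.trans hu.2⟩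
        have hsI : s ∈ Icc (0:ℝ) 1 := ⟨hs.1.le, hsIoc.2⟩
        rw [keyEntry gb hgbc s hsI i j, hentderiv s hsIoc i j, hgbs s hsI]
        have h2 : (∫ t in (0:ℝ)..s, (F s t * gb t) i j)
            = ∫ t in (0:ℝ)..s, (F s t * Sg' t) i j := by
          apply intervalIntegral.integral_congr
          intro t ht
          rw [uIcc_of_le hsI.1] at ht
          have ht1 : t ∈ Icc (0:ℝ) 1 := ⟨ht.1, ht.2.trans hsI.2⟩
          show (F s t * gb t) i j = (F s t * Sg' t) i j
          rw [hgbs t ht1]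
        rw [h2]
      rw [intervalIntegral.integral_congr_ae hcongr]
      have hFTC : (∫ s in (0:ℝ)..u, derivWithin (fun t => Sg' t i j) (Icc 0 1) s)
          = Sg' u i j - Sg' 0 i j := by
        refine intervalIntegral.integral_eq_sub_of_hasDeriv_right_of_le
          (f := fun t => Sg' t i j) hu.1 ?_ ?_ ?_
        · exact ((hC1' i j).continuousOn).mono (Icc_subset_Icc le_rfl hu.2)
        · intro x hx
          have hxI : x ∈ Icc (0:ℝ) 1 := ⟨hx.1.le, hx.2.le.trans hu.2⟩
          have hdiff := ((hC1' i j).differentiableOn one_ne_zero) x hxI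
          have hnb : Icc (0:ℝ) 1 ∈ nhds x := Icc_mem_nhds hx.1 (lt_of_lt_of_le hx.2 hu.2)
          exact ((hdiff.hasDerivWithinAt).hasDerivAt hnb).hasDerivWithinAt
        · apply ContinuousOn.intervalIntegrable
          rw [uIcc_of_le hu.1]
          exact (hdW' i j).mono (Icc_subset_Icc le_rfl hu.2)
      rw [hFTC, hgbs u hu, hinit']
      ring
    have hgbcpc : Continuous fun u => gb (pc u) := hgbc.comp continuous_pc
    have hfin := huni gb hgbcpc hgeq z hz
    calc Sg' z = gb z := (hgbs z hz).symm
      _ = f z := hfin
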